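/- arXiv:0704.3873 — 7 statements merged into one kernel-verified Lean document; each statement's English description precedes it below -/
import Mathlib

section
/- Let 0 < a < b and let r_1, r_2 be distinct positive reals, and set r = r_2 - r_1. Then \int_a^b \frac{\ln x}{(x+r_1)(x+r_2)} dx = \frac{1}{r}\left[\ln b \, \ln\left(\frac{r_2(b+r_1)}{r_1(b+r_2)}\right) + \ln a \, \ln\left(\frac{r_1(a+r_2)}{r_2(a+r_1)}\right)\right] + \frac{1}{r}\left[\mathrm{Li}_2\left(-\frac{b}{r_1}\right) - \mathrm{Li}_2\left(-\frac{a}{r_1}\right) - \mathrm{Li}_2\left(-\frac{b}{r_2}\right) + \mathrm{Li}_2\left(-\frac{a}{r_2}\right)\right]. -/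
open Real MeasureTheory intervalIntegral

/-- The dilogarithm evaluated at `-y`: `Li₂(-y) = -∫₀^y log(1+t)/t dt`. -/
noncomputable def Li2neg (y : ℝ) : ℝ := -∫ t in (0:ℝ)..y, Real.log (1 + t) / t


lemma g_intInt (c y : ℝ) (hc : 0 ≤ c) (hy : c ≤ y) :
    IntervalIntegrable (fun t => Real.log (1 + t) / t) volume c y := by
  rw [intervalIntegrable_iff_integrableOn_Ioc_of_le hy]
  apply MeasureTheory.Integrable.mono' (integrableOn_const (C := (1:ℝ)) measure_Ioc_lt_top.ne)
  · exact ((Real.measurable_log.comp (measurable_const.add measurable_id)).div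
      measurable_id).aestronglyMeasurable
  · filter_upwards [MeasureTheory.ae_restrict_mem measurableSet_Ioc] with t ht
    have ht0 : 0 < t := lt_of_le_of_lt hc ht.1
    have h1 : Real.log (1 + t) ≤ t := by
      have := Real.log_le_sub_one_of_pos (show (0:ℝ) < 1 + t by linarith)
      linarith
    have h0 : 0 ≤ Real.log (1 + t) := Real.log_nonneg (by linarith)
    rw [Real.norm_eq_abs, abs_of_nonneg (div_nonneg h0 ht0.le), div_le_one ht0]
    exact h1

lemma Li2neg_hasDerivAt (y : ℝ) (hy : 0 < y) :
    HasDerivAt Li2neg (-(Real.log (1 + y) / y)) y := by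
  have h1 : HasDerivAt (fun u => ∫ t in (0:ℝ)..u, Real.log (1 + t) / t)
      (Real.log (1 + y) / y) y := by
    apply intervalIntegral.integral_hasDerivAt_right (g_intInt 0 y le_rfl hy.le)
    · exact ((Real.measurable_log.comp (measurable_const.add measurable_id)).div
        measurable_id).aestronglyMeasurable.stronglyMeasurableAtFilter
    · apply ContinuousAt.div
      · exact (Real.continuousAt_log (by linarith)).comp (by fun_prop)
      · fun_prop
      · exact hy.ne'
  exact h1.neg

lemma integral_log_div_linear (a b r : ℝ) (ha : 0 < a) (hab : a ≤ b) (hr : 0 < r) :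
    ∫ x in a..b, Real.log x / (x + r) =
      (Real.log b * Real.log (1 + b / r) + Li2neg (b / r)) -
      (Real.log a * Real.log (1 + a / r) + Li2neg (a / r)) := by
  apply intervalIntegral.integral_eq_sub_of_hasDerivAt
  · intro x hx
    rw [Set.uIcc_of_le hab] at hx
    have hx0 : 0 < x := lt_of_lt_of_le ha hx.1
    have hxr : 0 < 1 + x / r := by positivity
    have h1 : HasDerivAt Real.log x⁻¹ x := Real.hasDerivAt_log hx0.ne'
    have h2 : HasDerivAt (fun x : ℝ => 1 + x / r) (1 / r) x := by
      simpa using ((hasDerivAt_id x).div_const r).const_add 1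
    have h3 : HasDerivAt (fun x : ℝ => Real.log (1 + x / r)) ((1 + x / r)⁻¹ * (1 / r)) x :=
      ((Real.hasDerivAt_log hxr.ne').comp x h2 :)
    have h4 : HasDerivAt (fun x : ℝ => x / r) (1 / r) x := by
      simpa using (hasDerivAt_id x).div_const r
    have h5 : HasDerivAt (fun x : ℝ => Li2neg (x / r))
        (-(Real.log (1 + x / r) / (x / r)) * (1 / r)) x :=
      ((Li2neg_hasDerivAt (x / r) (by positivity)).comp x h4 :)
    have h6 := (h1.mul h3).add h5
    convert h6 using 1
    · rfl
    field_simp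
    ring
  · apply ContinuousOn.intervalIntegrable
    intro x hx
    rw [Set.uIcc_of_le hab] at hx
    have hx0 : 0 < x := lt_of_lt_of_le ha hx.1
    apply ContinuousWithinAt.div
    · exact (Real.continuousAt_log hx0.ne').continuousWithinAt
    · exact (continuous_id.add continuous_const).continuousWithinAt
    · positivity

lemma intInt_log_div_linear (a b r : ℝ) (ha : 0 < a) (hab : a ≤ b) (hr : 0 < r) :
    IntervalIntegrable (fun x => Real.log x / (x + r)) volume a b := by
  apply ContinuousOn.intervalIntegrable
  intro x hx
  rw [Set.uIcc_of_le hab] at hx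
  have hx0 : 0 < x := lt_of_lt_of_le ha hx.1
  apply ContinuousWithinAt.div
  · exact (Real.continuousAt_log hx0.ne').continuousWithinAt
  · exact (continuous_id.add continuous_const).continuousWithinAt
  · positivity

theorem integral_log_div_two_linear (a b r₁ r₂ : ℝ) (ha : 0 < a) (hab : a < b)
    (hr₁ : 0 < r₁) (hr₂ : 0 < r₂) (hne : r₁ ≠ r₂) :
    ∫ x in a..b, Real.log x / ((x + r₁) * (x + r₂)) =
      (1 / (r₂ - r₁)) *
        (Real.log b * Real.log (r₂ * (b + r₁) / (r₁ * (b + r₂))) +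
          Real.log a * Real.log (r₁ * (a + r₂) / (r₂ * (a + r₁)))) +
      (1 / (r₂ - r₁)) *
        (Li2neg (b / r₁) - Li2neg (a / r₁) - Li2neg (b / r₂) + Li2neg (a / r₂)) := by
  have hb : 0 < b := ha.trans hab
  have hR : r₂ - r₁ ≠ 0 := sub_ne_zero_of_ne (Ne.symm hne)
  have hcongr : ∫ x in a..b, Real.log x / ((x + r₁) * (x + r₂)) =
      ∫ x in a..b, (1 / (r₂ - r₁)) * (Real.log x / (x + r₁) - Real.log x / (x + r₂)) := by
    apply intervalIntegral.integral_congr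
    intro x hx
    rw [Set.uIcc_of_le hab.le] at hx
    have hx0 : 0 < x := lt_of_lt_of_le ha hx.1
    have h1 : x + r₁ ≠ 0 := by positivity
    have h2 : x + r₂ ≠ 0 := by positivity
    field_simp
    ring
  rw [hcongr, intervalIntegral.integral_const_mul,
    intervalIntegral.integral_sub (intInt_log_div_linear a b r₁ ha hab.le hr₁)
      (intInt_log_div_linear a b r₂ ha hab.le hr₂),
    integral_log_div_linear a b r₁ ha hab.le hr₁,
    integral_log_div_linear a b r₂ ha hab.le hr₂]
  have e : ∀ x r : ℝ, 0 < x → 0 < r →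
      Real.log (1 + x / r) = Real.log (x + r) - Real.log r := by
    intro x r hx hr
    rw [show (1:ℝ) + x / r = (x + r) / r by field_simp; ring,
      Real.log_div (by positivity) hr.ne']
  have f : ∀ x s t : ℝ, 0 < x → 0 < s → 0 < t →
      Real.log (s * (x + t) / (t * (x + s))) =
        Real.log s + Real.log (x + t) - (Real.log t + Real.log (x + s)) := by
    intro x s t hx hs ht
    rw [Real.log_div (by positivity) (by positivity),
      Real.log_mul hs.ne' (by positivity), Real.log_mul ht.ne' (by positivity)]
  rw [e b r₁ hb hr₁, e b r₂ hb hr₂, e a r₁ ha hr₁, e a r₂ ha hr₂,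
    f b r₂ r₁ hb hr₂ hr₁, f a r₁ r₂ ha hr₁ hr₂]
  ring
end

section
/- Let u and v be distinct positive reals. Then the improper integral \int_0^\infty \frac{\ln x}{(x+u)(x+v)} dx equals \frac{(\ln u)^2 - (\ln v)^2}{2(u-v)}. -/
open Real MeasureTheory Set Filter


-- J: value and integrability of 1/((x+u)(x+v))
theorem J_aux (u v : ℝ) (hu : 0 < u) (hv : 0 < v) (huv : u ≠ v) :
    (∫ x in Set.Ioi (0:ℝ), 1 / ((x + u) * (x + v)) = (Real.log u - Real.log v) / (u - v)) ∧
    IntegrableOn (fun x : ℝ => 1 / ((x + u) * (x + v))) (Set.Ioi 0) := by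
  set g : ℝ → ℝ := fun x => (Real.log (x + u) - Real.log (x + v)) / (v - u) with hg
  have hvu : v - u ≠ 0 := sub_ne_zero.mpr (Ne.symm huv)
  have hderiv : ∀ x ∈ Set.Ici (0:ℝ), HasDerivAt g (1 / ((x + u) * (x + v))) x := by
    intro x hx
    have hx0 : (0:ℝ) ≤ x := hx
    have h1 : HasDerivAt (fun y : ℝ => Real.log (y + u)) (1/(x+u)) x := by
      simpa [Function.comp_def] using ((Real.hasDerivAt_log (by positivity)).comp x
        ((hasDerivAt_id x).add_const u))
    have h2 : HasDerivAt (fun y : ℝ => Real.log (y + v)) (1/(x+v)) x := by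
      simpa [Function.comp_def] using ((Real.hasDerivAt_log (by positivity)).comp x
        ((hasDerivAt_id x).add_const v))
    have := (h1.sub h2).div_const (v - u)
    refine this.congr_deriv ?_
    have hxu : x + u ≠ 0 := by positivity
    have hxv : x + v ≠ 0 := by positivity
    field_simp
    ring
  have hpos : ∀ x ∈ Set.Ioi (0:ℝ), 0 ≤ 1 / ((x + u) * (x + v)) := by
    intro x hx; have : (0:ℝ) < x := hx; positivity
  have htend : Tendsto g atTop (nhds 0) := by
    have h1 : Tendsto (fun x : ℝ => (x + u) / (x + v)) atTop (nhds 1) := by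
      have : (fun x : ℝ => (x + u) / (x + v)) =ᶠ[atTop] fun x => 1 + (u - v) / (x + v) := by
        filter_upwards [eventually_gt_atTop (0:ℝ)] with x hx
        field_simp
        ring
      rw [tendsto_congr' this]
      have h2 : Tendsto (fun x : ℝ => (u - v) / (x + v)) atTop (nhds 0) :=
        Tendsto.div_atTop tendsto_const_nhds (tendsto_atTop_add_const_right _ v tendsto_id)
      simpa using (tendsto_const_nhds (x := (1:ℝ)) (f := atTop)).add h2
    have h3 : Tendsto (fun x : ℝ => Real.log ((x + u) / (x + v))) atTop (nhds 0) := by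
      have := (Real.continuousAt_log (by norm_num : (1:ℝ) ≠ 0)).tendsto.comp h1
      simpa [Function.comp_def] using this
    have h4 : (fun x : ℝ => Real.log ((x + u) / (x + v))) =ᶠ[atTop]
        fun x => Real.log (x + u) - Real.log (x + v) := by
      filter_upwards [eventually_gt_atTop (0:ℝ)] with x hx
      rw [Real.log_div (by positivity) (by positivity)]
    rw [tendsto_congr' h4] at h3
    have := h3.div_const (v - u)
    simpa using this
  constructor
  · have := integral_Ioi_of_hasDerivAt_of_nonneg' hderiv hpos htend
    rw [this]
    simp only [hg, zero_add]
    have huv' : u - v ≠ 0 := sub_ne_zero.mpr huv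
    field_simp
    ring
  · exact integrableOn_Ioi_deriv_of_nonneg' hderiv hpos htend


theorem int_aux (u v : ℝ) (hu : 0 < u) (hv : 0 < v) :
    IntegrableOn (fun x : ℝ => Real.log x / ((x + u) * (x + v))) (Set.Ioi 0) := by
  have hmeas : ∀ s : Set ℝ, MeasurableSet s → AEStronglyMeasurable
      (fun x : ℝ => Real.log x / ((x + u) * (x + v))) (volume.restrict s) := by
    intro s _
    exact (Real.measurable_log.div (((measurable_id.add_const u).mul
      (measurable_id.add_const v)))).aestronglyMeasurable
  have key : Set.Ioc (0:ℝ) 1 ∪ Set.Ioi 1 = Set.Ioi 0 := Set.Ioc_union_Ioi_eq_Ioi zero_le_one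
  rw [← key]
  apply IntegrableOn.union
  · -- on (0,1]: |log x/((x+u)(x+v))| ≤ (2/(u*v)) * x^(-1/2)
    have hint : IntegrableOn (fun x : ℝ => 2/(u*v) * x ^ (-(1/2) : ℝ)) (Set.Ioc 0 1) := by
      have : IntervalIntegrable (fun x : ℝ => x ^ (-(1/2) : ℝ)) volume 0 1 :=
        intervalIntegral.intervalIntegrable_rpow' (by norm_num)
      rw [intervalIntegrable_iff_integrableOn_Ioc_of_le zero_le_one] at this
      exact this.const_mul _
    refine Integrable.mono hint (hmeas _ measurableSet_Ioc) ?_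
    rw [ae_restrict_iff' measurableSet_Ioc]
    refine ae_of_all _ fun x hx => ?_
    obtain ⟨hx0, hx1⟩ := hx
    have hsx : 0 < Real.sqrt x := Real.sqrt_pos.mpr hx0
    have hlog : |Real.log x| ≤ 2 / Real.sqrt x := by
      have hlx : Real.log x ≤ 0 := Real.log_nonpos (le_of_lt hx0) hx1
      rw [abs_of_nonpos hlx]
      have h1 : Real.log (1 / Real.sqrt x) ≤ 1 / Real.sqrt x - 1 :=
        Real.log_le_sub_one_of_pos (by positivity)
      rw [Real.log_div one_ne_zero (ne_of_gt hsx), Real.log_one, Real.log_sqrt (le_of_lt hx0)] at h1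
      have : -Real.log x ≤ 2 * (1 / Real.sqrt x - 1) := by linarith
      have h2 : 2 * (1 / Real.sqrt x - 1) ≤ 2 / Real.sqrt x := by
        rw [mul_sub, mul_one, mul_one_div]
        linarith
      linarith
    have hrpow : x ^ (-(1/2) : ℝ) = 1 / Real.sqrt x := by
      rw [Real.rpow_neg (le_of_lt hx0), Real.sqrt_eq_rpow, one_div]
      norm_num
    have hden : u * v ≤ (x + u) * (x + v) := by nlinarith
    have hdenpos : 0 < (x + u) * (x + v) := by positivity
    rw [Real.norm_eq_abs, Real.norm_eq_abs, abs_div, abs_of_pos hdenpos]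
    have hb : |Real.log x| / ((x + u) * (x + v)) ≤ (2 / Real.sqrt x) / (u * v) := by
      exact div_le_div₀ (by positivity) hlog (by positivity) hden
    calc |Real.log x| / ((x + u) * (x + v)) ≤ (2 / Real.sqrt x) / (u * v) := hb
      _ = 2/(u*v) * (x ^ (-(1/2) : ℝ)) := by rw [hrpow]; field_simp
      _ ≤ |2/(u*v) * x ^ (-(1/2) : ℝ)| := le_abs_self _
  · -- on (1,∞): |log x/((x+u)(x+v))| ≤ 2 * x^(-3/2)
    have hint : IntegrableOn (fun x : ℝ => 2 * x ^ (-(3/2) : ℝ)) (Set.Ioi 1) :=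
      (integrableOn_Ioi_rpow_of_lt (by norm_num) one_pos).const_mul _
    refine Integrable.mono hint (hmeas _ measurableSet_Ioi) ?_
    rw [ae_restrict_iff' measurableSet_Ioi]
    refine ae_of_all _ fun x hx => ?_
    have hx1 : (1:ℝ) < x := hx
    have hx0 : (0:ℝ) < x := lt_trans one_pos hx1
    have hsx : 1 ≤ Real.sqrt x := by
      rw [show (1:ℝ) = Real.sqrt 1 from (Real.sqrt_one).symm]
      exact Real.sqrt_le_sqrt (le_of_lt hx1)
    have hlog : |Real.log x| ≤ 2 * Real.sqrt x := by
      rw [abs_of_nonneg (Real.log_nonneg (le_of_lt hx1))]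
      have h1 : Real.log (Real.sqrt x) ≤ Real.sqrt x - 1 :=
        Real.log_le_sub_one_of_pos (by positivity)
      rw [Real.log_sqrt (le_of_lt hx0)] at h1
      nlinarith
    have hden : x * x ≤ (x + u) * (x + v) := by nlinarith
    have hdenpos : 0 < (x + u) * (x + v) := by positivity
    rw [Real.norm_eq_abs, Real.norm_eq_abs, abs_div, abs_of_pos hdenpos]
    have hb : |Real.log x| / ((x + u) * (x + v)) ≤ (2 * Real.sqrt x) / (x * x) := by
      exact div_le_div₀ (by positivity) hlog (by positivity) hden
    have heq : (2 * Real.sqrt x) / (x * x) = 2 * x ^ (-(3/2) : ℝ) := by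
      rw [Real.sqrt_eq_rpow]
      rw [show (-(3/2) : ℝ) = 1/2 - 2 by norm_num, Real.rpow_sub hx0]
      rw [show ((2:ℝ):ℝ) = ((2:ℕ):ℝ) by norm_num, Real.rpow_natCast]
      field_simp
    calc |Real.log x| / ((x + u) * (x + v)) ≤ (2 * Real.sqrt x) / (x * x) := hb
      _ = 2 * x ^ (-(3/2) : ℝ) := heq
      _ ≤ |2 * x ^ (-(3/2) : ℝ)| := le_abs_self _

theorem integral_log_div_two_linear_Ioi (u v : ℝ) (hu : 0 < u) (hv : 0 < v) (huv : u ≠ v) :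
    ∫ x in Set.Ioi (0:ℝ), Real.log x / ((x + u) * (x + v)) =
      ((Real.log u) ^ 2 - (Real.log v) ^ 2) / (2 * (u - v)) := by
  obtain ⟨hJ, hJint⟩ := J_aux u v hu hv huv
  have hIint := int_aux u v hu hv
  set c : ℝ := u * v with hc
  have hc0 : 0 < c := mul_pos hu hv
  set I : ℝ := ∫ x in Set.Ioi (0:ℝ), Real.log x / ((x + u) * (x + v)) with hI
  -- substitution x ↦ c / x
  have himg : (fun x : ℝ => c / x) '' Set.Ioi 0 = Set.Ioi 0 := by
    ext y
    constructor
    · rintro ⟨x, hx, rfl⟩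
      have : (0:ℝ) < x := hx
      exact div_pos hc0 this
    · intro hy
      have hy0 : (0:ℝ) < y := hy
      exact ⟨c / y, div_pos hc0 hy0, by field_simp⟩
  have hderiv : ∀ x ∈ Set.Ioi (0:ℝ),
      HasDerivWithinAt (fun x : ℝ => c / x) (-(c / x ^ 2)) (Set.Ioi 0) x := by
    intro x hx
    have hx0 : (0:ℝ) < x := hx
    have h := (hasDerivAt_inv (ne_of_gt hx0)).const_mul c
    have : HasDerivAt (fun x : ℝ => c / x) (-(c / x ^ 2)) x := by
      simp only [div_eq_mul_inv]
      exact h.congr_deriv (by ring)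
    exact this.hasDerivWithinAt
  have hinj : Set.InjOn (fun x : ℝ => c / x) (Set.Ioi 0) := by
    intro a ha b hb h
    have ha0 : (0:ℝ) < a := ha
    have hb0 : (0:ℝ) < b := hb
    field_simp at h
    rcases h with h | h
    · rfl
  have hsub := integral_image_eq_integral_abs_deriv_smul measurableSet_Ioi hderiv hinj
    (fun x : ℝ => Real.log x / ((x + u) * (x + v)))
  rw [himg] at hsub
  -- simplify the substituted integrand
  have hcong : ∀ x ∈ Set.Ioi (0:ℝ),
      |(-(c / x ^ 2))| • (Real.log (c / x) / ((c / x + u) * (c / x + v))) =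
      (Real.log c - Real.log x) / ((x + u) * (x + v)) := by
    intro x hx
    have hx0 : (0:ℝ) < x := hx
    rw [abs_neg, abs_of_nonneg (by positivity : (0:ℝ) ≤ c / x ^ 2), smul_eq_mul,
      Real.log_div (ne_of_gt hc0) (ne_of_gt hx0)]
    have h1 : c / x + u = u * (v + x) / x := by rw [hc]; field_simp
    have h2 : c / x + v = v * (u + x) / x := by rw [hc]; field_simp
    rw [h1, h2]
    have hne1 : u * (v + x) ≠ 0 := by positivity
    have hne2 : v * (u + x) ≠ 0 := by positivity
    field_simp
    ring
  rw [setIntegral_congr_fun measurableSet_Ioi hcong] at hsub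
  -- split the integral
  have hconstint : IntegrableOn (fun x : ℝ => Real.log c / ((x + u) * (x + v))) (Set.Ioi 0) := by
    have h := hJint.const_mul (Real.log c)
    refine (integrable_congr ?_).mpr h
    refine ae_of_all _ fun x => ?_
    simp only [mul_one_div]
  have hsplit : ∫ x in Set.Ioi (0:ℝ), (Real.log c - Real.log x) / ((x + u) * (x + v)) =
      (∫ x in Set.Ioi (0:ℝ), Real.log c / ((x + u) * (x + v))) - I := by
    rw [hI, ← integral_sub hconstint hIint]
    apply setIntegral_congr_fun measurableSet_Ioi
    intro x _
    simp [sub_div]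
  have hconst : ∫ x in Set.Ioi (0:ℝ), Real.log c / ((x + u) * (x + v)) =
      Real.log c * ((Real.log u - Real.log v) / (u - v)) := by
    rw [← hJ, ← integral_const_mul]
    apply setIntegral_congr_fun measurableSet_Ioi
    intro x _
    simp only [mul_one_div]
  have h2I : I = Real.log c * ((Real.log u - Real.log v) / (u - v)) - I := by
    calc I = ∫ x in Set.Ioi (0:ℝ), (Real.log c - Real.log x) / ((x + u) * (x + v)) := by
            rw [hI, hsub]
      _ = (∫ x in Set.Ioi (0:ℝ), Real.log c / ((x + u) * (x + v))) - I := hsplit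
      _ = Real.log c * ((Real.log u - Real.log v) / (u - v)) - I := by rw [hconst]
  have huv' : u - v ≠ 0 := sub_ne_zero.mpr huv
  have : 2 * I = Real.log c * ((Real.log u - Real.log v) / (u - v)) := by linarith
  have hlogc : Real.log c = Real.log u + Real.log v := Real.log_mul (ne_of_gt hu) (ne_of_gt hv)
  rw [hlogc] at this
  field_simp at this ⊢
  nlinarith [this]
end

section
/- Let 0 < a < b. Then \int_a^b \frac{\ln x}{(x+a)(x+b)} dx = \frac{\ln(ab)}{2(b-a)} \, \ln\left(\frac{(a+b)^2}{4ab}\right). -/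
open Real

theorem integral_log_div_shifted_elementary (a b : ℝ) (ha : 0 < a) (hab : a < b) :
    ∫ x in a..b, Real.log x / ((x + a) * (x + b)) =
      Real.log (a * b) / (2 * (b - a)) * Real.log ((a + b) ^ 2 / (4 * (a * b))) := by
  have hb : 0 < b := ha.trans hab
  have huIcc : Set.uIcc a b = Set.Icc a b := Set.uIcc_of_le hab.le
  have hIccIoi : Set.Icc a b ⊆ Set.Ioi 0 := fun x hx => lt_of_lt_of_le ha hx.1
  have hDpos : ∀ x : ℝ, 0 < x → 0 < (x + a) * (x + b) := fun x hx =>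
    mul_pos (by linarith) (by linarith)
  have hcont : ContinuousOn (fun x => Real.log x / ((x + a) * (x + b))) (Set.Ioi 0) := by
    apply ContinuousOn.div
    · exact Real.continuousOn_log.mono (fun x hx => ne_of_gt hx)
    · fun_prop
    · exact fun x hx => ne_of_gt (hDpos x hx)
  have hcont1 : ContinuousOn (fun x : ℝ => 1 / ((x + a) * (x + b))) (Set.Ioi 0) := by
    apply ContinuousOn.div
    · fun_prop
    · fun_prop
    · exact fun x hx => ne_of_gt (hDpos x hx)
  have hInt : IntervalIntegrable (fun x => Real.log x / ((x + a) * (x + b)))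
      MeasureTheory.volume a b :=
    (hcont.mono (huIcc ▸ hIccIoi : Set.uIcc a b ⊆ Set.Ioi 0)).intervalIntegrable
  have hInt1 : IntervalIntegrable (fun x : ℝ => 1 / ((x + a) * (x + b)))
      MeasureTheory.volume a b :=
    (hcont1.mono (huIcc ▸ hIccIoi : Set.uIcc a b ⊆ Set.Ioi 0)).intervalIntegrable
  -- substitution x ↦ a*b/x
  have hsub : (∫ x in a..b,
        (-(a*b)/x^2) • ((fun u => Real.log u / ((u + a) * (u + b))) ∘ (fun x => a*b/x)) x)
      = ∫ u in (a*b/a)..(a*b/b), Real.log u / ((u + a) * (u + b)) := by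
    apply intervalIntegral.integral_comp_smul_deriv'
    · intro x hx
      rw [huIcc] at hx
      have hx0 : 0 < x := hIccIoi hx
      have h := ((hasDerivAt_inv (ne_of_gt hx0)).const_mul (a*b))
      exact h.congr_deriv (by field_simp)
    · apply ContinuousOn.div
      · fun_prop
      · fun_prop
      · intro x hx
        rw [huIcc] at hx
        have hx0 : 0 < x := hIccIoi hx
        positivity
    · refine hcont.mono ?_
      rintro y ⟨x, hx, rfl⟩
      rw [huIcc] at hx
      have hx0 : 0 < x := hIccIoi hx
      have : (0:ℝ) < a*b/x := by positivity
      exact this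
  rw [show a*b/a = b by field_simp, show a*b/b = a by field_simp,
    intervalIntegral.integral_symm a b] at hsub
  -- pointwise rewrite of the substituted integrand
  have hpt : ∫ x in a..b,
        (-(a*b)/x^2) • ((fun u => Real.log u / ((u + a) * (u + b))) ∘ (fun x => a*b/x)) x
      = ∫ x in a..b, (Real.log x - Real.log (a*b)) / ((x + a) * (x + b)) := by
    apply intervalIntegral.integral_congr
    intro x hx
    rw [huIcc] at hx
    have hx0 : 0 < x := hIccIoi hx
    have hDx : ((x + a) * (x + b)) ≠ 0 := ne_of_gt (hDpos x hx0)
    have h1 : (0:ℝ) < a*b/x + a := by positivity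
    have h2 : (0:ℝ) < a*b/x + b := by positivity
    simp only [Function.comp, smul_eq_mul]
    rw [Real.log_div (by positivity) (ne_of_gt hx0)]
    field_simp
    ring
  -- conclusion of symmetry: 2 I = log(ab) * J
  rw [hpt] at hsub
  have hsplit : ∫ x in a..b, (Real.log x - Real.log (a*b)) / ((x + a) * (x + b))
      = (∫ x in a..b, Real.log x / ((x + a) * (x + b)))
        - Real.log (a*b) * ∫ x in a..b, 1 / ((x + a) * (x + b)) := by
    rw [← intervalIntegral.integral_const_mul, ← intervalIntegral.integral_sub hInt
      (hInt1.const_mul _)]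
    apply intervalIntegral.integral_congr
    intro x hx
    ring
  rw [hsplit] at hsub
  -- compute J by FTC
  have hJ : ∫ x in a..b, 1 / ((x + a) * (x + b))
      = (Real.log (b+a) - Real.log (b+b))/(b-a) - (Real.log (a+a) - Real.log (a+b))/(b-a) := by
    have hba : b - a ≠ 0 := by linarith
    apply intervalIntegral.integral_eq_sub_of_hasDerivAt
      (f := fun x => (Real.log (x+a) - Real.log (x+b))/(b-a))
    · intro x hx
      rw [huIcc] at hx
      have hx0 : 0 < x := hIccIoi hx
      have hxa : x + a ≠ 0 := by positivity
      have hxb : x + b ≠ 0 := by positivity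
      have h1 : HasDerivAt (fun x : ℝ => Real.log (x+a)) (1/(x+a)) x := by
        simpa [Function.comp_def] using (Real.hasDerivAt_log hxa).comp x ((hasDerivAt_id x).add_const a)
      have h2 : HasDerivAt (fun x : ℝ => Real.log (x+b)) (1/(x+b)) x := by
        simpa [Function.comp_def] using (Real.hasDerivAt_log hxb).comp x ((hasDerivAt_id x).add_const b)
      have h := (h1.sub h2).div_const (b-a)
      exact h.congr_deriv (by field_simp; ring)
    · exact hInt1
  rw [hJ] at hsub
  -- final algebra
  have hba : b - a ≠ 0 := by linarith
  have key : (∫ x in a..b, Real.log x / ((x + a) * (x + b)))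
      = Real.log (a*b) * ((Real.log (b+a) - Real.log (b+b))/(b-a)
        - (Real.log (a+a) - Real.log (a+b))/(b-a)) / 2 := by linarith
  have e1 : Real.log ((a + b) ^ 2 / (4 * (a * b)))
      = 2*Real.log (a+b) - Real.log (2*a) - Real.log (2*b) := by
    rw [Real.log_div (by positivity) (by positivity), Real.log_pow,
      show (4:ℝ)*(a*b) = (2*a)*(2*b) by ring,
      Real.log_mul (by positivity) (by positivity)]
    push_cast
    ring
  rw [key, e1, show b + a = a + b by ring, show a + a = 2*a by ring,
    show b + b = 2*b by ring]
  field_simp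
  ring
end

section
/- For every integer n \ge 3 and every real b > 0, h_n(b) = \frac{n-2}{n-1} h_{n-1}(b) + \frac{b \ln b}{(n-1)(1+b)^{n-1}} + \frac{1 - (1+b)^{n-2}}{(n-1)(n-2)(1+b)^{n-2}}. -/
open Real MeasureTheory intervalIntegral Set Filter Topology
open scoped Interval

lemma log_intble (b : ℝ) (hb : 0 < b) : IntervalIntegrable Real.log volume 0 b := by
  have hg : IntervalIntegrable (fun t : ℝ => 2 * t ^ ((1:ℝ)/2) + 2 * t ^ (-(1:ℝ)/2))
      volume 0 b := by
    exact ((intervalIntegral.intervalIntegrable_rpow' (by norm_num)).const_mul 2).add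
      ((intervalIntegral.intervalIntegrable_rpow' (by norm_num)).const_mul 2)
  refine hg.mono_fun Real.measurable_log.aestronglyMeasurable ?_
  filter_upwards [MeasureTheory.ae_restrict_mem measurableSet_Ioc] with t ht
  rw [uIoc_of_le hb.le] at ht
  have ht0 : 0 < t := ht.1
  have h1 : 0 < t ^ ((1:ℝ)/2) := Real.rpow_pos_of_pos ht0 _
  have h2 : 0 < t ^ (-(1:ℝ)/2) := Real.rpow_pos_of_pos ht0 _
  rw [Real.norm_eq_abs, Real.norm_eq_abs,
    abs_of_pos (show (0:ℝ) < 2 * t ^ ((1:ℝ)/2) + 2 * t ^ (-(1:ℝ)/2) by positivity)]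
  rcases le_or_gt 1 t with h | h
  · have : Real.log t ≤ 2 * t ^ ((1:ℝ)/2) := by
      have := Real.log_le_sub_one_of_pos h1
      rw [Real.log_rpow ht0] at this
      nlinarith
    rw [abs_of_nonneg (Real.log_nonneg h)]
    nlinarith
  · have : -Real.log t ≤ 2 * t ^ (-(1:ℝ)/2) := by
      have h2' : 0 < t ^ (-(1:ℝ)/2) := h2
      have := Real.log_le_sub_one_of_pos h2'
      rw [Real.log_rpow ht0] at this
      nlinarith
    rw [abs_of_nonpos (Real.log_nonpos ht0.le h.le)]
    nlinarith

lemma logmul_intble (b : ℝ) (hb : 0 < b) (g : ℝ → ℝ) (hg : ContinuousOn g (Icc 0 b)) :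
    IntervalIntegrable (fun t => Real.log t * g t) volume 0 b :=
  (log_intble b hb).mul_continuousOn (by rwa [uIcc_of_le hb.le])

lemma invpow_cont (b : ℝ) (c : ℕ) : ContinuousOn (fun t : ℝ => ((1+t)^c)⁻¹) (Icc 0 b) := by
  refine ContinuousOn.inv₀ (by fun_prop) fun t ht => pow_ne_zero _ (by nlinarith [ht.1])

lemma h_intble (b : ℝ) (hb : 0 < b) (c : ℕ) :
    IntervalIntegrable (fun t => Real.log t / (1+t)^c) volume 0 b := by
  simp_rw [div_eq_mul_inv]
  exact logmul_intble b hb _ (invpow_cont b c)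

/-- `h n b = ∫₀^b log t / (1+t)^n dt`. -/
noncomputable def h (n : ℕ) (b : ℝ) : ℝ := ∫ t in (0:ℝ)..b, Real.log t / (1 + t) ^ n

theorem h_recurrence (n : ℕ) (hn : 3 ≤ n) (b : ℝ) (hb : 0 < b) :
    h n b = ((n : ℝ) - 2) / ((n : ℝ) - 1) * h (n - 1) b +
      b * Real.log b / (((n : ℝ) - 1) * (1 + b) ^ (n - 1)) +
      (1 - (1 + b) ^ (n - 2)) / (((n : ℝ) - 1) * ((n : ℝ) - 2) * (1 + b) ^ (n - 2)) := by
  obtain ⟨k, rfl⟩ : ∃ k, n = k + 3 := ⟨n - 3, by omega⟩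
  set K1 : ℝ := (k : ℝ) + 1 with hK1
  set K2 : ℝ := (k : ℝ) + 2 with hK2
  have hK1p : 0 < K1 := by positivity
  have hK2p : 0 < K2 := by positivity
  set G : ℝ → ℝ := fun t => t / (1+t)^(k+2) with hG
  set G' : ℝ → ℝ := fun t => (1 - K1 * t) / (1+t)^(k+3) with hG'
  set F : ℝ → ℝ := fun t => -(K1⁻¹ * ((1+t)^(k+1))⁻¹) with hF
  have hne : ∀ t : ℝ, 0 ≤ t → (1 + t) ≠ 0 := fun t ht => by linarith
  -- derivatives
  have hdG : ∀ t : ℝ, 0 ≤ t → HasDerivAt G (G' t) t := by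
    intro t ht
    have h1 : HasDerivAt (fun s : ℝ => 1 + s) 1 t := (hasDerivAt_id t).const_add 1
    have hp : HasDerivAt (fun s : ℝ => (1+s)^(k+2)) (((k:ℝ)+2) * (1+t)^(k+1) * 1) t := by
      simpa using h1.fun_pow (k+2)
    have := (hasDerivAt_id t).div hp (pow_ne_zero _ (hne t ht))
    refine this.congr_deriv ?_
    have h0 := hne t ht
    simp only [hG', hK1, id_eq]
    rw [div_eq_div_iff (pow_ne_zero _ (pow_ne_zero _ h0)) (pow_ne_zero _ h0)]
    ring
  have hdF : ∀ t : ℝ, 0 ≤ t → HasDerivAt F (((1+t)^(k+2))⁻¹) t := by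
    intro t ht
    have h1 : HasDerivAt (fun s : ℝ => 1 + s) 1 t := (hasDerivAt_id t).const_add 1
    have hp : HasDerivAt (fun s : ℝ => (1+s)^(k+1)) (((k:ℝ)+1) * (1+t)^k * 1) t := by
      simpa using h1.fun_pow (k+1)
    have := ((hp.fun_inv (pow_ne_zero _ (hne t ht))).const_mul K1⁻¹).fun_neg
    refine this.congr_deriv ?_
    have h0 := hne t ht
    have hK1' : K1 ≠ 0 := by positivity
    rw [hK1]
    field_simp
    ring
  -- integrability of the main integrand
  have hG'cont : ContinuousOn G' (Icc 0 b) := by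
    refine ContinuousOn.div (by fun_prop) (by fun_prop) fun t ht => pow_ne_zero _ (hne t ht.1)
  have hfint : IntervalIntegrable (fun t => Real.log t * G' t) volume 0 b :=
    logmul_intble b hb G' hG'cont
  set I : ℝ := ∫ t in (0:ℝ)..b, Real.log t * G' t with hI
  -- the filter
  set l : Filter ℝ := 𝓝[Ioo (0:ℝ) b] 0 with hl
  haveI hlne : l.NeBot := by
    refine mem_closure_iff_nhdsWithin_neBot.mp ?_
    rw [closure_Ioo hb.ne]
    exact ⟨le_refl 0, hb.le⟩
  have hmem : ∀ᶠ ε in l, ε ∈ Ioo (0:ℝ) b := eventually_mem_nhdsWithin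
  -- T1 : the truncated integrals tend to I
  have T1 : Tendsto (fun ε => ∫ t in ε..b, Real.log t * G' t) l (𝓝 I) := by
    have hint' : IntegrableOn (fun t => Real.log t * G' t) (uIcc 0 b) volume := by
      rw [uIcc_of_le hb.le, integrableOn_Icc_iff_integrableOn_Ioc]
      simpa [intervalIntegrable_iff, uIoc_of_le hb.le] using hfint
    have cont := intervalIntegral.continuousOn_primitive_interval_left hint'
    have := (cont 0 (by rw [uIcc_of_le hb.le]; exact ⟨le_refl 0, hb.le⟩))
    refine this.tendsto.mono_left (nhdsWithin_mono _ ?_)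
    rw [uIcc_of_le hb.le]
    exact Ioo_subset_Icc_self
  -- T2 : explicit formula tends to the limit
  have hlG : Tendsto (fun ε : ℝ => Real.log ε * G ε) l (𝓝 0) := by
    have h1 : Tendsto (fun ε : ℝ => Real.log ε * ε) (𝓝[>] (0:ℝ)) (𝓝 0) := by
      have := tendsto_log_mul_rpow_nhdsGT_zero (r := 1) one_pos
      simpa using this
    have h2 : Tendsto (fun ε : ℝ => ((1+ε)^(k+2))⁻¹) (𝓝 (0:ℝ)) (𝓝 ((1+(0:ℝ))^(k+2))⁻¹) :=
      (((continuous_const.add continuous_id).pow _).continuousAt (x := (0:ℝ))).inv₀ (by norm_num)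
    have h3 : Tendsto (fun ε : ℝ => Real.log ε * ε * ((1+ε)^(k+2))⁻¹) (𝓝[>] (0:ℝ))
        (𝓝 (0 * ((1+(0:ℝ))^(k+2))⁻¹)) := h1.mul (h2.mono_left nhdsWithin_le_nhds)
    have h4 : Tendsto (fun ε : ℝ => Real.log ε * ε * ((1+ε)^(k+2))⁻¹) l (𝓝 0) := by
      simpa using h3.mono_left (nhdsWithin_mono _ Ioo_subset_Ioi_self)
    refine h4.congr fun ε => ?_
    simp [hG, div_eq_mul_inv, mul_assoc]
  have hlF : Tendsto (fun ε : ℝ => F ε) l (𝓝 (F 0)) := by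
    exact ((hdF 0 le_rfl).continuousAt.tendsto).mono_left nhdsWithin_le_nhds
  have T2 : Tendsto (fun ε : ℝ => Real.log b * G b - Real.log ε * G ε - (F b - F ε)) l
      (𝓝 (Real.log b * G b - 0 - (F b - F 0))) :=
    (tendsto_const_nhds.sub hlG).sub (tendsto_const_nhds.sub hlF)
  -- T3 : eventual equality
  have T3 : ∀ᶠ ε in l, (∫ t in ε..b, Real.log t * G' t) =
      Real.log b * G b - Real.log ε * G ε - (F b - F ε) := by
    filter_upwards [hmem] with ε hε
    have hεb : ε ≤ b := hε.2.le
    have hIcc : [[ε, b]] = Icc ε b := uIcc_of_le hεb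
    have hpos : ∀ t ∈ [[ε, b]], 0 < t := by
      rw [hIcc]; intro t ht; exact lt_of_lt_of_le hε.1 ht.1
    have ibp := intervalIntegral.integral_mul_deriv_eq_deriv_mul
      (u := Real.log) (v := G) (u' := fun t => t⁻¹) (v' := G') (a := ε) (b := b)
      (fun x hx => Real.hasDerivAt_log (hpos x hx).ne')
      (fun x hx => hdG x (hpos x hx).le)
      (ContinuousOn.intervalIntegrable (by
        exact continuousOn_inv₀.mono fun x hx => (hpos x hx).ne'))
      (ContinuousOn.intervalIntegrable (by
        rw [hIcc]
        exact hG'cont.mono (Icc_subset_Icc hε.1.le le_rfl)))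
    rw [ibp]
    congr 1
    have hcongr : ∀ t ∈ [[ε, b]], t⁻¹ * G t = ((1+t)^(k+2))⁻¹ := by
      intro t ht
      have ht0 : 0 < t := hpos t ht
      have h0 := hne t ht0.le
      simp only [hG]
      field_simp
    rw [intervalIntegral.integral_congr hcongr]
    rw [intervalIntegral.integral_eq_sub_of_hasDerivAt
      (fun t ht => hdF t (le_trans hε.1.le (by rw [hIcc] at ht; exact ht.1)))
      (ContinuousOn.intervalIntegrable (by
        rw [hIcc]
        exact (invpow_cont b (k+2)).mono (Icc_subset_Icc hε.1.le le_rfl)))]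
  -- conclude the value of I
  have hIval : I = Real.log b * G b - 0 - (F b - F 0) :=
    tendsto_nhds_unique (T1.congr' T3) T2
  -- I in terms of h
  have hIh : I = K2 * h (k+3) b - K1 * h (k+2) b := by
    rw [hI]
    have hcongr : ∀ t ∈ [[(0:ℝ), b]], Real.log t * G' t =
        K2 * (Real.log t / (1+t)^(k+3)) - K1 * (Real.log t / (1+t)^(k+2)) := by
      intro t ht
      rw [uIcc_of_le hb.le] at ht
      have h0 := hne t ht.1
      simp only [hG', hK1, hK2]
      field_simp
      ring
    rw [intervalIntegral.integral_congr hcongr,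
      intervalIntegral.integral_sub ((h_intble b hb (k+3)).const_mul _)
        ((h_intble b hb (k+2)).const_mul _),
      intervalIntegral.integral_const_mul, intervalIntegral.integral_const_mul]
    rfl
  -- final algebra
  have hb1 : (0:ℝ) < 1 + b := by linarith
  have e1 : k + 3 - 1 = k + 2 := rfl
  have e2 : k + 3 - 2 = k + 1 := rfl
  rw [e1, e2]
  have ec : ((k + 3 : ℕ) : ℝ) = (k : ℝ) + 3 := by push_cast; ring
  rw [ec]
  have key : K2 * h (k+3) b - K1 * h (k+2) b =
      Real.log b * (b / (1+b)^(k+2)) - 0 -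
        (-(K1⁻¹ * ((1+b)^(k+1))⁻¹) - -(K1⁻¹ * ((1+(0:ℝ))^(k+1))⁻¹)) := by
    rw [← hIh, hIval]
  have hK1' : K1 ≠ 0 := hK1p.ne'
  have hK2' : K2 ≠ 0 := hK2p.ne'
  have hp1 : ((1:ℝ)+b)^(k+1) ≠ 0 := pow_ne_zero _ hb1.ne'
  have hp2 : ((1:ℝ)+b)^(k+2) ≠ 0 := pow_ne_zero _ hb1.ne'
  have hgoal : ((k:ℝ) + 3 - 2) = K1 := by rw [hK1]; ring
  have hgoal2 : ((k:ℝ) + 3 - 1) = K2 := by rw [hK2]; ring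
  rw [hgoal, hgoal2]
  have h10 : ((1+(0:ℝ))^(k+1) : ℝ) = 1 := by norm_num
  rw [h10] at key
  have key2 : h (k+3) b = (K1 * h (k+2) b + Real.log b * (b/(1+b)^(k+2))
      + K1⁻¹ * ((1+b)^(k+1))⁻¹ - K1⁻¹) / K2 := by
    rw [eq_div_iff hK2']
    nlinarith [key]
  rw [key2]
  field_simp
  ring
end

section
/- For every integer n \ge 3 and every real b > 0, q_n(b) = \frac{n-2}{n-1}(1+b) q_{n-1}(b) + \frac{b \ln b}{n-1} - \frac{(1+b)\left[(1+b)^{n-2} - 1\right]}{(n-1)(n-2)}. -/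
open Real

/-- `q n b = (1+b)^(n-1) * h n b`. -/
noncomputable def q (n : ℕ) (b : ℝ) : ℝ := (1 + b) ^ (n - 1) * h n b

open MeasureTheory intervalIntegral

lemma abs_log_le (t : ℝ) (ht : 0 < t) : |Real.log t| ≤ 2 * t ^ (-(1/2 : ℝ)) + t := by
  have hrp : 0 < t ^ (-(1/2 : ℝ)) := Real.rpow_pos_of_pos ht _
  rcases le_or_gt 1 t with h1 | h1
  · have h0 : |Real.log t| = Real.log t := abs_of_nonneg (Real.log_nonneg h1)
    have := Real.log_le_sub_one_of_pos ht
    nlinarith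
  · have hlt : Real.log t ≤ 0 := Real.log_nonpos ht.le h1.le
    rw [abs_of_nonpos hlt]
    have h2 : Real.log (t ^ (-(1/2:ℝ))) = -(1/2) * Real.log t := Real.log_rpow ht _
    have h3 : Real.log (t ^ (-(1/2:ℝ))) ≤ t ^ (-(1/2:ℝ)) - 1 :=
      Real.log_le_sub_one_of_pos hrp
    nlinarith

lemma intInt_log_div (m : ℕ) (b : ℝ) (hb : 0 < b) :
    IntervalIntegrable (fun t => Real.log t / (1 + t) ^ m) volume 0 b := by
  have hg : IntervalIntegrable (fun t : ℝ => 2 * t ^ (-(1/2:ℝ)) + t) volume 0 b :=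
    ((intervalIntegral.intervalIntegrable_rpow' (by norm_num)).const_mul 2).add
      intervalIntegrable_id
  refine hg.mono_fun' ?_ ?_
  · exact (Real.measurable_log.div
      ((measurable_const.add measurable_id').pow_const m)).aestronglyMeasurable
  · rw [Set.uIoc_of_le hb.le]
    filter_upwards [ae_restrict_mem measurableSet_Ioc] with t ht
    have ht0 : (0:ℝ) < t := ht.1
    have hpow : (1:ℝ) ≤ (1 + t) ^ m := one_le_pow₀ (by linarith)
    have h1 : ‖Real.log t / (1 + t) ^ m‖ ≤ |Real.log t| := by
      rw [Real.norm_eq_abs, abs_div, abs_of_nonneg (by positivity : (0:ℝ) ≤ (1+t)^m)]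
      exact div_le_self (abs_nonneg _) hpow
    exact h1.trans ((abs_log_le t ht0).trans (by nlinarith))

lemma key (k : ℕ) (b : ℝ) (hb : 0 < b) :
    ((k:ℝ)+2) * h (k+3) b - ((k:ℝ)+1) * h (k+2) b
      = b * Real.log b / (1+b)^(k+2) - (1 - ((1+b)^(k+1))⁻¹) / ((k:ℝ)+1) := by
  set Ψ : ℝ → ℝ := fun t => t * Real.log t / (1+t)^(k+2) - (1 - ((1+t)^(k+1))⁻¹) / ((k:ℝ)+1)
    with hΨ
  set g : ℝ → ℝ := fun t => ((k:ℝ)+2) * (Real.log t / (1+t)^(k+3))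
      - ((k:ℝ)+1) * (Real.log t / (1+t)^(k+2)) with hg
  have hgint : IntervalIntegrable g volume 0 b :=
    ((intInt_log_div (k+3) b hb).const_mul _).sub ((intInt_log_div (k+2) b hb).const_mul _)
  have hcont : ContinuousOn Ψ (Set.Icc 0 b) := by
    apply ContinuousOn.sub
    · apply ContinuousOn.div (Real.continuous_mul_log.continuousOn)
        (by fun_prop)
      intro t ht
      have : (0:ℝ) ≤ t := ht.1
      positivity
    · apply ContinuousOn.div_const
      apply ContinuousOn.sub continuousOn_const
      apply ContinuousOn.inv₀ (by fun_prop)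
      intro t ht
      have : (0:ℝ) ≤ t := ht.1
      positivity
  have hderiv : ∀ t ∈ Set.Ioo (0:ℝ) b, HasDerivAt Ψ (g t) t := by
    intro t ht
    have ht0 : (0:ℝ) < t := ht.1
    have h1t : (0:ℝ) < 1 + t := by linarith
    have h1 : HasDerivAt (fun t : ℝ => 1 + t) 1 t := (hasDerivAt_id t).const_add 1
    have hp2 : HasDerivAt (fun t : ℝ => (1+t)^(k+2))
        (((k:ℝ)+2) * (1+t)^(k+1) * 1) t := by
      have := h1.pow (k+2)
      norm_num at this ⊢
      exact this
    have hp1 : HasDerivAt (fun t : ℝ => (1+t)^(k+1))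
        (((k:ℝ)+1) * (1+t)^k * 1) t := by
      have := h1.pow (k+1)
      norm_num at this ⊢
      exact this
    have hlog : HasDerivAt Real.log t⁻¹ t := Real.hasDerivAt_log (ne_of_gt ht0)
    have htlog : HasDerivAt (fun t : ℝ => t * Real.log t) (1 * Real.log t + t * t⁻¹) t :=
      (hasDerivAt_id t).mul hlog
    have hq : HasDerivAt (fun t : ℝ => t * Real.log t / (1+t)^(k+2))
        (((1 * Real.log t + t * t⁻¹) * (1+t)^(k+2)
          - (t * Real.log t) * (((k:ℝ)+2) * (1+t)^(k+1) * 1)) / ((1+t)^(k+2))^2) t :=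
      htlog.div hp2 (by positivity)
    have hr : HasDerivAt (fun t : ℝ => (1 - ((1+t)^(k+1))⁻¹) / ((k:ℝ)+1))
        ((0 - (-(((k:ℝ)+1) * (1+t)^k * 1) / ((1+t)^(k+1))^2)) / ((k:ℝ)+1)) t :=
      ((hasDerivAt_const t (1:ℝ)).sub (hp1.inv (by positivity))).div_const _
    have := hq.sub hr
    refine this.congr_deriv ?_
    rw [hg]
    have hk1 : ((k:ℝ)+1) ≠ 0 := by positivity
    field_simp
    ring
  have := intervalIntegral.integral_eq_sub_of_hasDeriv_right_of_le hb.le hcont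
    (fun t ht => (hderiv t ht).hasDerivWithinAt) hgint
  have hΨ0 : Ψ 0 = 0 := by simp [hΨ]
  have hsplit : (∫ t in (0:ℝ)..b, g t)
      = ((k:ℝ)+2) * h (k+3) b - ((k:ℝ)+1) * h (k+2) b := by
    rw [hg, h, h]
    rw [intervalIntegral.integral_sub ((intInt_log_div (k+3) b hb).const_mul _)
      ((intInt_log_div (k+2) b hb).const_mul _),
      intervalIntegral.integral_const_mul, intervalIntegral.integral_const_mul]
  rw [hsplit, hΨ0, sub_zero] at this
  rw [this, hΨ]

theorem q_recurrence (n : ℕ) (hn : 3 ≤ n) (b : ℝ) (hb : 0 < b) :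
    q n b = ((n : ℝ) - 2) / ((n : ℝ) - 1) * (1 + b) * q (n - 1) b +
      b * Real.log b / ((n : ℝ) - 1) -
      (1 + b) * ((1 + b) ^ (n - 2) - 1) / (((n : ℝ) - 1) * ((n : ℝ) - 2)) := by
  obtain ⟨k, rfl⟩ : ∃ k, n = k + 3 := ⟨n - 3, by omega⟩
  have h1b : (0:ℝ) < 1 + b := by linarith
  have hk1 : ((k:ℝ)+1) ≠ 0 := by positivity
  have hk2 : ((k:ℝ)+2) ≠ 0 := by positivity
  have hPne : ((1:ℝ)+b) ≠ 0 := ne_of_gt h1b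
  have hP1 : ((1:ℝ)+b)^(k+1) ≠ 0 := by positivity
  have hP2 : ((1:ℝ)+b)^(k+2) ≠ 0 := by positivity
  have hkey' : (((k:ℝ)+2) * h (k+3) b - ((k:ℝ)+1) * h (k+2) b)
      * ((1+b)^(k+2) * ((k:ℝ)+1))
      = b * Real.log b * ((k:ℝ)+1) - ((1+b)^(k+2) - (1+b)) := by
    rw [key k b hb]
    field_simp
    ring
  have e1 : k + 3 - 1 = k + 2 := rfl
  have e2 : k + 3 - 2 = k + 1 := rfl
  have e3 : k + 2 - 1 = k + 1 := rfl
  simp only [q, e1, e2, e3]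
  push_cast
  have hs1 : ((k:ℝ)+3-1) = (k:ℝ)+2 := by ring
  have hs2 : ((k:ℝ)+3-2) = (k:ℝ)+1 := by ring
  rw [hs1, hs2]
  have ha : (2:ℝ)+(k:ℝ) ≠ 0 := by positivity
  have hc : (2:ℝ)+(k:ℝ)*3+(k:ℝ)^2 ≠ 0 := by positivity
  have hd : (1:ℝ)+(k:ℝ) ≠ 0 := by positivity
  field_simp [ha, hc, hd]
  linear_combination hkey'
end

section
/- Define a sequence of polynomials S_n(x) (with real coefficients) for integers n \ge 2 by S_2(x) = 0 and the recurrence S_n(x) = (n-2) x S_{n-1}(x) + (n-3)! \sum_{r=0}^{n-3} x^r for n \ge 3. Then for every integer n \ge 3, the coefficient sequence c_{k,n} of S_n(x) = \sum_{k=0}^{n-3} c_{k,n} x^k is nondecreasing in k: c_{k,n} \le c_{k+1,n} for 0 \le k \le n-4. -/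
open Polynomial

private lemma geom_coeff (m k : ℕ) :
    ((∑ r ∈ Finset.range m, (X : ℝ[X]) ^ r).coeff k) = if k < m then 1 else 0 := by
  rw [Polynomial.finset_sum_coeff]
  simp only [Polynomial.coeff_X_pow]
  rw [Finset.sum_ite_eq (Finset.range m) k (fun _ => (1:ℝ))]
  simp [Finset.mem_range]

private lemma key_coeff (a b : ℝ) (p : ℝ[X]) (m k : ℕ) :
    (C a * X * p + C b * ∑ r ∈ Finset.range m, (X : ℝ[X]) ^ r).coeff k
      = a * (if k = 0 then 0 else p.coeff (k - 1)) + b * (if k < m then 1 else 0) := by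
  rw [Polynomial.coeff_add, Polynomial.coeff_C_mul, geom_coeff, mul_assoc,
    Polynomial.coeff_C_mul]
  cases k with
  | zero => simp [Polynomial.mul_coeff_zero]
  | succ j => simp [Polynomial.coeff_X_mul]

theorem S_coeffs_monotone (S : ℕ → Polynomial ℝ)
    (hinit : S 2 = 0)
    (hrec : ∀ n : ℕ, 3 ≤ n →
      S n = Polynomial.C ((n : ℝ) - 2) * Polynomial.X * S (n - 1) +
        Polynomial.C ((Nat.factorial (n - 3) : ℝ)) *
          ∑ r ∈ Finset.range (n - 2), Polynomial.X ^ r) :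
    ∀ n : ℕ, 3 ≤ n → ∀ k : ℕ, k + 4 ≤ n →
      (S n).coeff k ≤ (S n).coeff (k + 1) := by
  have nonneg : ∀ n : ℕ, 2 ≤ n → ∀ k, 0 ≤ (S n).coeff k := by
    intro n hn
    induction n, hn using Nat.le_induction with
    | base => intro k; simp [hinit]
    | succ n hn ih =>
      intro k
      rw [hrec (n + 1) (by omega)]
      simp only [Nat.add_sub_cancel]
      rw [key_coeff]
      have ha : (0:ℝ) ≤ ((n + 1 : ℕ) : ℝ) - 2 := by
        push_cast
        have : (2:ℝ) ≤ (n : ℝ) := by exact_mod_cast hn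
        linarith
      have hb : (0:ℝ) ≤ ((Nat.factorial (n + 1 - 3) : ℕ) : ℝ) := by positivity
      apply add_nonneg
      · apply mul_nonneg ha
        split
        · exact le_refl 0
        · exact ih _
      · apply mul_nonneg hb
        split <;> norm_num
  intro n hn
  induction n, hn using Nat.le_induction with
  | base => intro k hk; omega
  | succ n hn ih =>
    intro k hk
    rw [hrec (n + 1) (by omega)]
    simp only [Nat.add_sub_cancel]
    rw [key_coeff, key_coeff]
    have ha : (0:ℝ) ≤ ((n + 1 : ℕ) : ℝ) - 2 := by
      push_cast
      have : (3:ℝ) ≤ (n : ℝ) := by exact_mod_cast hn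
      linarith
    cases k with
    | zero =>
      have h0 : (0 : ℕ) < n + 1 - 2 := by omega
      have h1 : (1 : ℕ) < n + 1 - 2 := by omega
      simp only [if_pos h0, if_pos h1, if_pos rfl, if_neg (one_ne_zero)]
      have : (0:ℝ) ≤ ((n:ℝ) + 1 - 2) * (S n).coeff 0 :=
        mul_nonneg (by push_cast at ha; linarith) (nonneg n (by omega) 0)
      norm_num
      linarith
    | succ j =>
      have h1 : j + 1 < n + 1 - 2 := by omega
      have h2 : j + 1 + 1 < n + 1 - 2 := by omega
      simp only [if_pos h1, if_pos h2, if_neg (Nat.succ_ne_zero j),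
        if_neg (Nat.succ_ne_zero (j + 1)), Nat.add_sub_cancel]
      have hm : (S n).coeff j ≤ (S n).coeff (j + 1) := ih j (by omega)
      have := mul_le_mul_of_nonneg_left hm ha
      linarith
end

section
/- Define a sequence of polynomials T_n(b) (with real coefficients) for integers n \ge 2 by T_2(b) = 0 and the recurrence T_n(b) = (n-2)(1+b) T_{n-1}(b) + (n-3)! \sum_{j=0}^{n-3} (1+b)^j for n \ge 3. Then for every integer n \ge 3 the polynomial T_n is unimodal: writing T_n(b) = \sum_{k=0}^{n-3} c_k b^k, there exists an index n^* with 0 \le n^* \le n-3 such that c_k \le c_{k+1} for all k < n^* and c_k \ge c_{k+1} for all k with n^* \le k \le n-4. -/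
open Polynomial Finset

/-- Coefficients of `T n` in the basis `(1+X)^j`. -/
noncomputable def dd : ℕ → ℕ → ℝ
  | n, 0 => (Nat.factorial (n - 3) : ℝ)
  | n, j + 1 => ((n : ℝ) - 2) * dd (n - 1) j + (Nat.factorial (n - 3) : ℝ)

lemma dd_nonneg : ∀ j n, 2 ≤ n → 0 ≤ dd n j := by
  intro j
  induction j with
  | zero => intro n _; show (0:ℝ) ≤ (Nat.factorial (n - 3) : ℝ); positivity
  | succ j ih =>
    intro n hn
    show 0 ≤ ((n : ℝ) - 2) * dd (n - 1) j + (Nat.factorial (n - 3) : ℝ)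
    rcases Nat.lt_or_ge n 3 with h | h
    · have : n = 2 := by omega
      subst this
      norm_num
    · have h1 : 0 ≤ dd (n - 1) j := ih (n - 1) (by omega)
      have h2 : (0:ℝ) ≤ (n : ℝ) - 2 := by
        have : (3:ℝ) ≤ (n:ℝ) := by exact_mod_cast h
        linarith
      positivity

lemma dd_mono : ∀ j n, 3 ≤ n → j + 1 ≤ n - 3 → dd n j ≤ dd n (j + 1) := by
  intro j
  induction j with
  | zero =>
    intro n hn hj
    show dd n 0 ≤ ((n : ℝ) - 2) * dd (n - 1) 0 + (Nat.factorial (n - 3) : ℝ)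
    have h1 : 0 ≤ dd (n - 1) 0 := dd_nonneg 0 (n - 1) (by omega)
    have h2 : (0:ℝ) ≤ (n : ℝ) - 2 := by
      have : (3:ℝ) ≤ (n:ℝ) := by exact_mod_cast hn
      linarith
    have : dd n 0 = (Nat.factorial (n - 3) : ℝ) := rfl
    rw [this]
    nlinarith
  | succ j ih =>
    intro n hn hj
    show ((n : ℝ) - 2) * dd (n - 1) j + (Nat.factorial (n - 3) : ℝ) ≤
      ((n : ℝ) - 2) * dd (n - 1) (j + 1) + (Nat.factorial (n - 3) : ℝ)
    have h1 : dd (n - 1) j ≤ dd (n - 1) (j + 1) := ih (n - 1) (by omega) (by omega)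
    have h2 : (0:ℝ) ≤ (n : ℝ) - 2 := by
      have : (3:ℝ) ≤ (n:ℝ) := by exact_mod_cast hn
      linarith
    nlinarith

lemma T_eq (T : ℕ → Polynomial ℝ)
    (hinit : T 2 = 0)
    (hrec : ∀ n : ℕ, 3 ≤ n →
      T n = Polynomial.C ((n : ℝ) - 2) * (1 + Polynomial.X) * T (n - 1) +
        Polynomial.C ((Nat.factorial (n - 3) : ℝ)) *
          ∑ j ∈ Finset.range (n - 2), (1 + Polynomial.X) ^ j) :
    ∀ n, 3 ≤ n → T n = ∑ j ∈ Finset.range (n - 2), C (dd n j) * (1 + X) ^ j := by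
  intro n hn
  induction n, hn using Nat.le_induction with
  | base =>
    rw [hrec 3 le_rfl, hinit]
    have h0 : dd 3 0 = (1 : ℝ) := by show ((Nat.factorial 0 : ℕ) : ℝ) = 1; norm_num
    norm_num [Finset.sum_range_one, h0]
  | succ n hn ih =>
    rw [hrec (n + 1) (by omega)]
    have e1 : n + 1 - 1 = n := rfl
    have e2 : n + 1 - 2 = n - 1 := rfl
    have e3 : n + 1 - 3 = n - 2 := rfl
    rw [e1, e2, e3, ih]
    have hm : n - 1 = (n - 2) + 1 := by omega
    rw [hm]
    rw [Finset.sum_range_succ' (fun j => C (dd (n + 1) j) * (1 + X) ^ j) (n - 2)]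
    rw [Finset.sum_range_succ' (fun j => ((1 : ℝ[X]) + X) ^ j) (n - 2)]
    rw [Finset.mul_sum, mul_add (C ((Nat.factorial (n - 2) : ℝ))), Finset.mul_sum]
    have hdd0 : dd (n + 1) 0 = ((Nat.factorial (n - 2) : ℕ) : ℝ) := rfl
    rw [hdd0, ← add_assoc]
    congr 1
    rw [← Finset.sum_add_distrib]
    refine Finset.sum_congr rfl fun j _ => ?_
    have hdd : dd (n + 1) (j + 1) =
        (((n + 1 : ℕ) : ℝ) - 2) * dd n j + ((Nat.factorial (n - 2) : ℕ) : ℝ) := rfl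
    rw [hdd, map_add, map_mul]
    ring

/-- `G k N = C(N,k+1) - C(N,k)` as a real number. -/
noncomputable def G (k N : ℕ) : ℝ := (N.choose (k + 1) : ℝ) - (N.choose k : ℝ)

lemma choose_anti (N k : ℕ) (h : N ≤ 2 * k + 1) : N.choose (k + 1) ≤ N.choose k := by
  have key := Nat.choose_succ_right_eq N k
  have h1 : N - k ≤ k + 1 := by omega
  have : N.choose (k + 1) * (k + 1) ≤ N.choose k * (k + 1) := by
    rw [key]; exact Nat.mul_le_mul_left _ h1
  exact Nat.le_of_mul_le_mul_right this (Nat.succ_pos k)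

lemma choose_mono (N k : ℕ) (h : 2 * k + 1 ≤ N) : N.choose k ≤ N.choose (k + 1) := by
  have key := Nat.choose_succ_right_eq N k
  have h1 : k + 1 ≤ N - k := by omega
  have : N.choose k * (k + 1) ≤ N.choose (k + 1) * (k + 1) := by
    rw [key]; exact Nat.mul_le_mul_left _ h1
  exact Nat.le_of_mul_le_mul_right this (Nat.succ_pos k)

lemma G_step (k N : ℕ) : G (k + 1) (N + 1) = G (k + 1) N + G k N := by
  simp only [G, Nat.choose_succ_succ' N (k + 1), Nat.choose_succ_succ' N k]
  push_cast
  ring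

lemma G_nonpos (k : ℕ) : ∀ N, N ≤ 2 * k + 2 → G (k + 1) N ≤ 0 := by
  intro N
  induction N with
  | zero => intro _; simp [G, Nat.choose_eq_zero_of_lt]
  | succ N ih =>
    intro h
    rw [G_step]
    have h2 : G k N ≤ 0 := by
      have := choose_anti N k (by omega)
      simp only [G, sub_nonpos]
      exact_mod_cast this
    have := ih (by omega)
    linarith

lemma G_anti (k : ℕ) : ∀ t N, t ≤ N → N ≤ 2 * k + 2 → G (k + 1) N ≤ G (k + 1) t := by
  intro t N
  induction N with
  | zero => intro h _; interval_cases t; simp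
  | succ N ih =>
    intro h1 h2
    rcases Nat.lt_or_ge t (N + 1) with h | h
    · have step : G k N ≤ 0 := by
        have := choose_anti N k (by omega)
        simp only [G, sub_nonpos]
        exact_mod_cast this
      have := ih (by omega) (by omega)
      rw [G_step]; linarith
    · have : t = N + 1 := by omega
      simp [this]

lemma G_mono (k : ℕ) : ∀ t N, 2 * k + 1 ≤ t → t ≤ N → G (k + 1) t ≤ G (k + 1) N := by
  intro t N ht
  induction N with
  | zero => intro h; omega
  | succ N ih =>
    intro h1
    rcases Nat.lt_or_ge t (N + 1) with h | h
    · have step : 0 ≤ G k N := by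
        have := choose_mono N k (by omega)
        simp only [G, sub_nonneg]
        exact_mod_cast this
      have := ih (by omega)
      rw [G_step]; linarith
    · have : t = N + 1 := by omega
      simp [this]

lemma G_sym_zero (k : ℕ) : G (k + 1) (2 * k + 3) = 0 := by
  have h1 : (2 * k + 3).choose (2 * k + 3 - (k + 2)) = (2 * k + 3).choose (k + 2) :=
    Nat.choose_symm (by omega)
  have h2 : 2 * k + 3 - (k + 2) = k + 1 := by omega
  rw [h2] at h1
  simp only [G, h1, sub_self]

lemma tele (a e : ℕ → ℝ) (he0 : e 0 = a 0)
    (hes : ∀ t, e (t + 1) = a (t + 1) - a t) :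
    ∀ j, ∑ t ∈ range (j + 1), e t = a j := by
  intro j
  induction j with
  | zero => simpa using he0
  | succ j ih => rw [Finset.sum_range_succ, ih, hes]; ring

/-- Abel summation identity. -/
lemma abel_identity (a e : ℕ → ℝ) (he0 : e 0 = a 0)
    (hes : ∀ t, e (t + 1) = a (t + 1) - a t) (k : ℕ) :
    ∀ m, ∑ j ∈ range (m + 1), a j * G k j =
      ∑ t ∈ range (m + 1), e t * (G (k + 1) (m + 1) - G (k + 1) t) := by
  intro m
  induction m with
  | zero =>
    rw [Finset.sum_range_one, Finset.sum_range_one, he0, G_step]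
    ring
  | succ m ih =>
    rw [Finset.sum_range_succ, ih]
    conv_rhs => rw [Finset.sum_range_succ]
    rw [hes m, G_step k (m + 1)]
    have expand : ∀ t : ℕ, e t * (G (k + 1) (m + 1) + G k (m + 1) - G (k + 1) t) =
        e t * (G (k + 1) (m + 1) - G (k + 1) t) + e t * G k (m + 1) := by
      intro t; ring
    simp_rw [expand]
    rw [Finset.sum_add_distrib, ← Finset.sum_mul, tele a e he0 hes m]
    ring

theorem T_unimodal (T : ℕ → Polynomial ℝ)
    (hinit : T 2 = 0)
    (hrec : ∀ n : ℕ, 3 ≤ n →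
      T n = Polynomial.C ((n : ℝ) - 2) * (1 + Polynomial.X) * T (n - 1) +
        Polynomial.C ((Nat.factorial (n - 3) : ℝ)) *
          ∑ j ∈ Finset.range (n - 2), (1 + Polynomial.X) ^ j) :
    ∀ n : ℕ, 3 ≤ n →
      ∃ nstar : ℕ, nstar ≤ n - 3 ∧
        (∀ k : ℕ, k < nstar → (T n).coeff k ≤ (T n).coeff (k + 1)) ∧
        (∀ k : ℕ, nstar ≤ k → k + 4 ≤ n → (T n).coeff (k + 1) ≤ (T n).coeff k) := by
  intro n hn
  set m : ℕ := n - 3 with hm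
  have hn2 : n - 2 = m + 1 := by omega
  -- coefficient formula
  have hc : ∀ k, (T n).coeff k = ∑ j ∈ range (m + 1), dd n j * (j.choose k : ℝ) := by
    intro k
    rw [T_eq T hinit hrec n hn, hn2, Polynomial.finset_sum_coeff]
    refine Finset.sum_congr rfl fun j _ => ?_
    rw [Polynomial.coeff_C_mul, Polynomial.coeff_one_add_X_pow]
  -- difference increments
  set e : ℕ → ℝ := fun t => if t = 0 then dd n 0 else dd n t - dd n (t - 1) with he
  have he0 : e 0 = dd n 0 := by simp [he]
  have hes : ∀ t, e (t + 1) = dd n (t + 1) - dd n t := by intro t; simp [he]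
  have he_nonneg : ∀ t, t ≤ m → 0 ≤ e t := by
    intro t ht
    cases t with
    | zero =>
      rw [he0]
      show (0 : ℝ) ≤ ((Nat.factorial (n - 3) : ℕ) : ℝ)
      positivity
    | succ s =>
      rw [hes s, sub_nonneg]
      exact dd_mono s n hn (by omega)
  have hdiff : ∀ k, (T n).coeff (k + 1) - (T n).coeff k =
      ∑ t ∈ range (m + 1), e t * (G (k + 1) (m + 1) - G (k + 1) t) := by
    intro k
    rw [hc, hc, ← abel_identity (fun j => dd n j) e he0 hes k m, ← Finset.sum_sub_distrib]
    exact Finset.sum_congr rfl fun j _ => by simp only [G]; ring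
  refine ⟨m / 2, by omega, ?_, ?_⟩
  · -- increasing part
    intro k hk
    have hkm : 2 * k + 2 ≤ m := by omega
    have htop : 0 ≤ G (k + 1) (m + 1) := by
      have h1 := G_mono k (2 * k + 3) (m + 1) (by omega) (by omega)
      rw [G_sym_zero k] at h1
      exact h1
    have : 0 ≤ (T n).coeff (k + 1) - (T n).coeff k := by
      rw [hdiff k]
      refine Finset.sum_nonneg fun t ht => ?_
      rw [Finset.mem_range] at ht
      refine mul_nonneg (he_nonneg t (by omega)) (sub_nonneg.mpr ?_)
      rcases Nat.lt_or_ge t (2 * k + 3) with h | h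
      · exact le_trans (G_nonpos k t (by omega)) htop
      · exact G_mono k t (m + 1) (by omega) (by omega)
    linarith
  · -- decreasing part
    intro k hk _
    have hkm : m + 1 ≤ 2 * k + 2 := by omega
    have : (T n).coeff (k + 1) - (T n).coeff k ≤ 0 := by
      rw [hdiff k]
      refine Finset.sum_nonpos fun t ht => ?_
      rw [Finset.mem_range] at ht
      refine mul_nonpos_of_nonneg_of_nonpos (he_nonneg t (by omega)) (sub_nonpos.mpr ?_)
      exact G_anti k t (m + 1) (by omega) (by omega)
    linarith
end
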